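/- For each i in {p, p+1, ..., m-1}, P_i (I - e_{i+1}e_{i+1}^T + d_{i+1}e_{i+1}^T) ⋯ (I - e_m e_m^T + d_m e_m^T) = P_i (I + d_{i+1}e_{i+1}^T) ⋯ (I + d_m e_m^T), proved by downward induction on i starting from i = m-1, using that P_{i-1} P_i = P_{i-1}, e_i^T P_i = e_i^T, and P_{i-1} e_i = 0. -/

import Mathlib

/-- Outer product `u vᵀ` of two vectors in `ℝ^m`. -/
def outerProd {m : ℕ} (u v : Fin m → ℝ) : Matrix (Fin m) (Fin m) ℝ :=
  fun i j => u i * v j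

/-- The `k`-th canonical basis vector of `ℝ^m`. -/
def canonBasis {m : ℕ} (k : Fin m) : Fin m → ℝ := fun i => if i = k then 1 else 0

/-- `P_i`: diagonal projection matrix onto the first `i` coordinates. -/
def projMat (m i : ℕ) : Matrix (Fin m) (Fin m) ℝ :=
  Matrix.diagonal (fun j => if (j : ℕ) < i then (1 : ℝ) else 0)

lemma mul_outerProd {m : ℕ} (A : Matrix (Fin m) (Fin m) ℝ) (u v : Fin m → ℝ) :
    A * outerProd u v = outerProd (A.mulVec u) v := by
  ext a b
  simp only [outerProd, Matrix.mul_apply, Matrix.mulVec, dotProduct,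
    Finset.sum_mul, mul_assoc]

lemma outerProd_mul_outerProd {m : ℕ} (u r v w : Fin m → ℝ) :
    outerProd u r * outerProd v w = (∑ c, r c * v c) • outerProd u w := by
  ext a b
  simp only [outerProd, Matrix.mul_apply, Matrix.smul_apply, smul_eq_mul]
  rw [Finset.sum_mul]
  exact Finset.sum_congr rfl fun c _ => by ring

lemma outerProd_add_right {m : ℕ} (u r s : Fin m → ℝ) :
    outerProd u (r + s) = outerProd u r + outerProd u s := by
  ext a b; simp [outerProd, mul_add]

lemma smul_outerProd {m : ℕ} (c : ℝ) (u v : Fin m → ℝ) :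
    c • outerProd u v = outerProd u (c • v) := by
  ext a b; simp [outerProd]; ring

lemma projMat_mulVec_canon {m i : ℕ} (him : i < m) :
    (projMat m i).mulVec (canonBasis (⟨i, him⟩ : Fin m)) = 0 := by
  ext j
  simp only [projMat, canonBasis, Matrix.mulVec_diagonal, Pi.zero_apply]
  by_cases h : j = (⟨i, him⟩ : Fin m)
  · subst h; simp
  · simp [h]

lemma projMat_mul_projMat {m i j : ℕ} (h : i ≤ j) :
    projMat m i * projMat m j = projMat m i := by
  ext a b
  simp only [projMat, Matrix.diagonal_mul_diagonal, Matrix.diagonal_apply]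
  split_ifs <;> simp_all <;> omega

lemma mem_drop_finRange {m i : ℕ} {j : Fin m} (h : j ∈ (List.finRange m).drop i) :
    i ≤ (j : ℕ) := by
  obtain ⟨t, ht, rfl⟩ := List.mem_iff_getElem.mp h
  simp only [List.getElem_drop, List.getElem_finRange]
  simp

example (m i : ℕ) (him : i < m) :
    (List.finRange m).drop i = ⟨i, him⟩ :: (List.finRange m).drop (i+1) := by
  rw [List.drop_eq_getElem_cons (by simp [him])]
  simp [List.getElem_finRange, Fin.ext_iff]

lemma outerProd_mul_factor {m : ℕ} (u r w : Fin m → ℝ) (k : Fin m) (hk : r k = 0) :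
    outerProd u r * ((1 : Matrix (Fin m) (Fin m) ℝ)
        - outerProd (canonBasis k) (canonBasis k) + outerProd w (canonBasis k))
      = outerProd u (r + (∑ c, r c * w c) • canonBasis k) := by
  have hz : (∑ c, r c * canonBasis k c) = 0 := by
    simp [canonBasis, mul_ite, hk]
  rw [mul_add, mul_sub, mul_one, outerProd_mul_outerProd, outerProd_mul_outerProd, hz,
    zero_smul, sub_zero, smul_outerProd, outerProd_add_right]

lemma outerProd_mul_factorB {m : ℕ} (u r w : Fin m → ℝ) (k : Fin m) :
    outerProd u r * ((1 : Matrix (Fin m) (Fin m) ℝ) + outerProd w (canonBasis k))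
      = outerProd u (r + (∑ c, r c * w c) • canonBasis k) := by
  rw [mul_add, mul_one, outerProd_mul_outerProd, smul_outerProd, outerProd_add_right]

lemma row_lemma {m : ℕ} (d : Fin m → (Fin m → ℝ)) :
    ∀ (l : List (Fin m)), l.Nodup → ∀ (u r : Fin m → ℝ), (∀ j ∈ l, r j = 0) →
    outerProd u r * (l.map (fun k => (1 : Matrix (Fin m) (Fin m) ℝ)
          - outerProd (canonBasis k) (canonBasis k) + outerProd (d k) (canonBasis k))).prod
    = outerProd u r * (l.map
        (fun k => (1 : Matrix (Fin m) (Fin m) ℝ) + outerProd (d k) (canonBasis k))).prod := by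
  intro l
  induction l with
  | nil => intro _ u r _; simp
  | cons k t ih =>
    intro hnd u r hr
    have hk : r k = 0 := hr k List.mem_cons_self
    simp only [List.map_cons, List.prod_cons, ← mul_assoc]
    rw [outerProd_mul_factor u r (d k) k hk, outerProd_mul_factorB u r (d k) k]
    exact ih hnd.of_cons u _ (fun j hj => by
      have hjk : j ≠ k := fun h => (List.nodup_cons.mp hnd).1 (h ▸ hj)
      simp [hr j (List.mem_cons_of_mem _ hj), canonBasis, hjk])

lemma aux_main {m : ℕ} (d : Fin m → (Fin m → ℝ)) :
    ∀ (n i : ℕ), m ≤ i + n →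
    projMat m i *
      (((List.finRange m).drop i).map
        (fun k => (1 : Matrix (Fin m) (Fin m) ℝ)
          - outerProd (canonBasis k) (canonBasis k) + outerProd (d k) (canonBasis k))).prod
    = projMat m i *
      (((List.finRange m).drop i).map
        (fun k => (1 : Matrix (Fin m) (Fin m) ℝ) + outerProd (d k) (canonBasis k))).prod := by
  intro n
  induction n with
  | zero =>
    intro i hi
    rw [List.drop_eq_nil_of_le (by simpa using hi)]
    simp
  | succ n ih =>
    intro i hi
    by_cases him : i < m
    · have hd : (List.finRange m).drop i = ⟨i, him⟩ :: (List.finRange m).drop (i+1) := by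
        rw [List.drop_eq_getElem_cons (by simp [him])]
        simp [List.getElem_finRange, Fin.ext_iff]
      set v : Fin m → ℝ := (projMat m i).mulVec (d ⟨i, him⟩) with hv
      have hfac : ∀ w : Matrix (Fin m) (Fin m) ℝ,
          projMat m i * ((1 : Matrix (Fin m) (Fin m) ℝ) + outerProd (d ⟨i, him⟩) (canonBasis ⟨i, him⟩))
            = projMat m i + outerProd v (canonBasis ⟨i, him⟩) := by
        intro _
        rw [mul_add, mul_one, mul_outerProd]
      have hfacA : projMat m i * ((1 : Matrix (Fin m) (Fin m) ℝ)
            - outerProd (canonBasis ⟨i, him⟩) (canonBasis ⟨i, him⟩)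
            + outerProd (d ⟨i, him⟩) (canonBasis ⟨i, him⟩))
          = projMat m i + outerProd v (canonBasis ⟨i, him⟩) := by
        rw [mul_add, mul_sub, mul_one, mul_outerProd, mul_outerProd, projMat_mulVec_canon him]
        have : outerProd (0 : Fin m → ℝ) (canonBasis (⟨i, him⟩ : Fin m)) = 0 := by
          ext a b; simp [outerProd]
        rw [this, sub_zero]
      -- nodup and vanishing for the tail
      have hnd : ((List.finRange m).drop (i+1)).Nodup :=
        (List.nodup_finRange m).sublist (List.drop_sublist _ _)
      have hrow : ∀ j ∈ (List.finRange m).drop (i+1), canonBasis (⟨i, him⟩ : Fin m) j = 0 := by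
        intro j hj
        have := mem_drop_finRange hj
        simp [canonBasis, Fin.ext_iff]
        omega
      -- projMat m i * prod over tail : use IH through projMat (i+1)
      have hP : ∀ M : Matrix (Fin m) (Fin m) ℝ,
          projMat m i * (projMat m (i+1) * M) = projMat m i * M := by
        intro M; rw [← mul_assoc, projMat_mul_projMat (Nat.le_succ i)]
      have ihs := ih (i+1) (by omega)
      have hPA : projMat m i *
          (((List.finRange m).drop (i+1)).map
            (fun k => (1 : Matrix (Fin m) (Fin m) ℝ)
              - outerProd (canonBasis k) (canonBasis k) + outerProd (d k) (canonBasis k))).prod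
        = projMat m i *
          (((List.finRange m).drop (i+1)).map
            (fun k => (1 : Matrix (Fin m) (Fin m) ℝ) + outerProd (d k) (canonBasis k))).prod := by
        rw [← hP, ihs, hP]
      rw [hd]
      simp only [List.map_cons, List.prod_cons, ← mul_assoc]
      rw [hfacA, hfac 0, add_mul, add_mul, hPA,
        row_lemma d _ hnd v (canonBasis ⟨i, him⟩) hrow]
    · rw [List.drop_eq_nil_of_le (by simp; omega)]
      simp


/-- For each `i ∈ {p, …, m-1}` (so that, 0-based, the factors run over `k = i, …, m-1`,
i.e. `e_{i+1}, …, e_m` in 1-based notation):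
`P_i (I - e_{i+1}e_{i+1}ᵀ + d_{i+1}e_{i+1}ᵀ) ⋯ (I - e_m e_mᵀ + d_m e_mᵀ)
  = P_i (I + d_{i+1}e_{i+1}ᵀ) ⋯ (I + d_m e_mᵀ)`. -/
theorem backprop_algebra_downward (p m : ℕ) (hp : 0 < p) (hpm : p < m)
    (d : Fin m → (Fin m → ℝ)) (i : ℕ) (hip : p ≤ i) (him : i < m) :
    projMat m i *
      (((List.finRange m).drop i).map
        (fun k => (1 : Matrix (Fin m) (Fin m) ℝ)
          - outerProd (canonBasis k) (canonBasis k) + outerProd (d k) (canonBasis k))).prod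
    = projMat m i *
      (((List.finRange m).drop i).map
        (fun k => (1 : Matrix (Fin m) (Fin m) ℝ) + outerProd (d k) (canonBasis k))).prod := by
  exact aux_main d m i (by omega)
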